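/- For the weighted umbrella graph G_{3,ρ} (hub v₀ joined to v₁,v₂,v₃ by edges of weight 1, and rim edges [v₁v₂],[v₂v₃],[v₃v₁] of weight ρ > 0) and any f : V → ℝ with f(v₀) = 0, writing αᵢ = f(vᵢ), one has Γ(f)(v₀) = (1/6)(α₁² + α₂² + α₃²) and Γ₂(f)(v₀) = (ρ/(6(1+2ρ)) + 2/9)Σᵢαᵢ² + (1/9)Σ_{i<j}αᵢαⱼ − (2ρ/(3(1+2ρ)))(α₁α₂ + α₂α₃ + α₃α₁). -/
import Mathlib


open Finset

noncomputable def vWeight {V : Type*} [Fintype V] (G : SimpleGraph V) [DecidableRel G.Adj]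
    (w : V → V → ℝ) (x : V) : ℝ :=
  ∑ v ∈ univ.filter (fun v => G.Adj x v), w x v

noncomputable def lap {V : Type*} [Fintype V] (G : SimpleGraph V) [DecidableRel G.Adj]
    (w : V → V → ℝ) (f : V → ℝ) (x : V) : ℝ :=
  (1 / vWeight G w x) * ∑ v ∈ univ.filter (fun v => G.Adj x v), w x v * (f v - f x)

noncomputable def gam {V : Type*} [Fintype V] (G : SimpleGraph V) [DecidableRel G.Adj]
    (w : V → V → ℝ) (f g : V → ℝ) (x : V) : ℝ :=
  (1 / (2 * vWeight G w x)) *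
    ∑ v ∈ univ.filter (fun v => G.Adj x v), w x v * (f v - f x) * (g v - g x)

/-- Edge weights of the umbrella graph `G_{3,ρ}` on vertices `v₀,v₁,v₂,v₃`:
hub edges `[v₀vᵢ]` have weight 1, rim edges weight `ρ`. -/
noncomputable def w3 (ρ : ℝ) : Fin 4 → Fin 4 → ℝ :=
  fun i j => if i = j then 0 else if i = 0 ∨ j = 0 then 1 else ρ

set_option maxHeartbeats 2000000 in
theorem stmt5 (ρ : ℝ) (hρ : 0 < ρ) (f : Fin 4 → ℝ) (hf : f 0 = 0) :
    gam (⊤ : SimpleGraph (Fin 4)) (w3 ρ) f f 0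
      = (1/6) * (f 1 ^ 2 + f 2 ^ 2 + f 3 ^ 2) ∧
    (1/2) * (lap (⊤ : SimpleGraph (Fin 4)) (w3 ρ) (gam ⊤ (w3 ρ) f f) 0
        - 2 * gam (⊤ : SimpleGraph (Fin 4)) (w3 ρ) f (lap ⊤ (w3 ρ) f) 0)
      = (ρ / (6 * (1 + 2 * ρ)) + 2/9) * (f 1 ^ 2 + f 2 ^ 2 + f 3 ^ 2)
        + (1/9) * (f 1 * f 2 + f 1 * f 3 + f 2 * f 3)
        - (2 * ρ / (3 * (1 + 2 * ρ))) * (f 1 * f 2 + f 2 * f 3 + f 3 * f 1) := by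
  have h1 : (1:ℝ) + 2*ρ ≠ 0 := by linarith
  simp only [gam, lap, vWeight, w3, SimpleGraph.top_adj, Finset.sum_filter,
    Fin.sum_univ_four, hf, show ((0:Fin 4)=1)=False by decide, show ((0:Fin 4)=2)=False by decide, show ((0:Fin 4)=3)=False by decide, show ((1:Fin 4)=0)=False by decide, show ((1:Fin 4)=2)=False by decide, show ((1:Fin 4)=3)=False by decide, show ((2:Fin 4)=0)=False by decide, show ((2:Fin 4)=1)=False by decide, show ((2:Fin 4)=3)=False by decide, show ((3:Fin 4)=0)=False by decide, show ((3:Fin 4)=1)=False by decide, show ((3:Fin 4)=2)=False by decide,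
    if_true, if_false, ne_eq, not_false_eq_true, not_true, or_self, or_true, true_or,
    false_or, or_false, if_pos rfl, sub_zero, zero_sub, mul_zero, zero_mul, mul_one, one_mul,
    add_zero, zero_add]
  constructor
  · field_simp
    ring
  · field_simp
    ring
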